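/- Fix integers d ≥ 2 and j0 ≥ 0 and a real M ≥ 2. For each integer j ≥ j0, let ∇_j be a finite set, the sets ∇_j being pairwise disjoint, with 2^{j−1} ≤ #∇_j ≤ M·2^{j−1}. For an integer ℓ ≥ d·j0, let J_ℓ = {(j_1,…,j_d) ∈ ℤ^d : j_k ≥ j0 for all k, j_1+…+j_d = ℓ} and U∇(ℓ) = ⋃_{(j_1,…,j_d)∈J_ℓ} ∇_{j_1}×…×∇_{j_d}, the union being disjoint. Then for every ℓ ≥ d·j0: 2^{−d}·(d−1)^{−(d−1)}·(ℓ − d·j0 + d − 1)^{d−1}·2^ℓ ≤ #U∇(ℓ) ≤ (M/2)^d·(e/(d−1))^{d−1}·(ℓ − d·j0 + d − 1)^{d−1}·2^ℓ. -/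

import Mathlib

open Finset

open Nat (factorial)
open scoped Nat

private lemma fact_eq_prod_sub (kk : ℕ) : ∏ i ∈ Finset.range kk, (kk - i) = kk ! := by
  rw [← Finset.prod_range_add_one_eq_factorial kk,
    ← Finset.prod_range_reflect (fun i => i + 1) kk]
  refine Finset.prod_congr rfl fun i hi => ?_
  rw [Finset.mem_range] at hi
  omega

private lemma pow_le_pow_mul_choose {mm kk : ℕ} (h : kk ≤ mm) :
    mm ^ kk ≤ kk ^ kk * mm.choose kk := by
  have key : ∏ i ∈ Finset.range kk, (mm * (kk - i)) ≤ ∏ i ∈ Finset.range kk, (kk * (mm - i)) := by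
    refine Finset.prod_le_prod' fun i hi => ?_
    rw [Nat.mul_sub, Nat.mul_sub, mul_comm kk mm]
    exact Nat.sub_le_sub_left (Nat.mul_le_mul_right i h) _
  rw [Finset.prod_mul_distrib, Finset.prod_const, Finset.card_range, fact_eq_prod_sub] at key
  rw [Finset.prod_mul_distrib, Finset.prod_const, Finset.card_range,
    ← Nat.descFactorial_eq_prod_range, Nat.descFactorial_eq_factorial_mul_choose] at key
  have key2 : mm ^ kk * kk ! ≤ (kk ^ kk * mm.choose kk) * kk ! := by
    calc mm ^ kk * kk ! ≤ kk ^ kk * (kk ! * mm.choose kk) := key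
    _ = (kk ^ kk * mm.choose kk) * kk ! := by ring
  exact Nat.le_of_mul_le_mul_right key2 kk.factorial_pos

private lemma pow_le_exp_mul_factorial (kk : ℕ) :
    (kk : ℝ) ^ kk ≤ Real.exp 1 ^ kk * kk ! := by
  have h1 : ((kk : ℝ)) ^ kk / kk ! ≤ Real.exp kk := by
    refine le_trans ?_ (Real.sum_le_exp_of_nonneg (by positivity) (kk + 1))
    refine Finset.single_le_sum (f := fun i => (kk : ℝ) ^ i / i !) (fun i _ => by positivity)
      (Finset.self_mem_range_succ kk)
  rw [Real.exp_one_pow]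
  rw [div_le_iff₀ (by positivity)] at h1
  calc (kk : ℝ) ^ kk ≤ Real.exp kk * kk ! := h1
  _ = Real.exp kk * kk ! := rfl

private lemma card_JJ_eq {d j0 ℓ n0 : ℕ} (JJ : Finset (Fin d → ℕ))
    (hJJ : ∀ jv, jv ∈ JJ ↔ ((∀ k, j0 ≤ jv k) ∧ ∑ k, jv k = ℓ)) (hn : ℓ = n0 + d * j0) :
    JJ.card = (d + n0 - 1).choose n0 := by
  classical
  have e : {x // x ∈ JJ} ≃ {P : Fin d → ℕ // ∑ i, P i = n0} :=
    { toFun := fun jv => ⟨fun k => jv.1 k - j0, by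
        obtain ⟨h1, h2⟩ := (hJJ jv.1).mp jv.2
        have h3 : ∑ k, (jv.1 k - j0 + j0) = ℓ :=
          (Finset.sum_congr rfl fun k _ => Nat.sub_add_cancel (h1 k)).trans h2
        rw [Finset.sum_add_distrib, Finset.sum_const, Finset.card_univ, Fintype.card_fin,
          smul_eq_mul] at h3
        show ∑ k, (jv.1 k - j0) = n0
        omega⟩
      invFun := fun P => ⟨fun k => P.1 k + j0, by
        rw [hJJ]
        refine ⟨fun k => Nat.le_add_left _ _, ?_⟩
        rw [Finset.sum_add_distrib, P.2, Finset.sum_const, Finset.card_univ, Fintype.card_fin,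
          smul_eq_mul, hn]⟩
      left_inv := fun jv =>
        Subtype.ext (funext fun k => Nat.sub_add_cancel (((hJJ jv.1).mp jv.2).1 k))
      right_inv := fun P => Subtype.ext (funext fun k => by simp) }
  calc JJ.card = Nat.card {x // x ∈ JJ} := (Nat.card_eq_finsetCard JJ).symm
  _ = Nat.card {P : Fin d → ℕ // ∑ i, P i = n0} := Nat.card_congr e
  _ = Nat.card (Sym (Fin d) n0) := (Nat.card_congr (Sym.equivNatSumOfFintype (Fin d) n0)).symm
  _ = (d + n0 - 1).choose n0 := by
      rw [Nat.card_eq_fintype_card, Sym.card_sym_eq_choose, Fintype.card_fin]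

/-- Cardinality bound for the hyperbolic index sets `U∇(ℓ)` (eq. (cardbignabla) in the
proof of Proposition 4):
`2^{−d}(d−1)^{−(d−1)}(ℓ−dj₀+d−1)^{d−1} 2^ℓ ≤ #U∇(ℓ) ≤ (M/2)^d (e/(d−1))^{d−1}(ℓ−dj₀+d−1)^{d−1} 2^ℓ`. -/
theorem stmt3
    (d j0 : ℕ) (hd : 2 ≤ d) (M : ℝ) (hM : 2 ≤ M)
    {Λ0 : Type*} [DecidableEq Λ0]
    (nabla : ℕ → Finset Λ0)
    (hdisj : ∀ j j', j0 ≤ j → j0 ≤ j' → j ≠ j' → Disjoint (nabla j) (nabla j'))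
    (hcard : ∀ j, j0 ≤ j →
      (2 : ℝ) ^ ((j : ℤ) - 1) ≤ ((nabla j).card : ℝ)
      ∧ ((nabla j).card : ℝ) ≤ M * (2 : ℝ) ^ ((j : ℤ) - 1))
    (JJ : ℕ → Finset (Fin d → ℕ))
    (hJJ : ∀ ℓ jv, jv ∈ JJ ℓ ↔ ((∀ k, j0 ≤ jv k) ∧ ∑ k, jv k = ℓ))
    (Unabla : ℕ → Finset (Fin d → Λ0))
    (hUnabla : ∀ ℓ lam, lam ∈ Unabla ℓ ↔ ∃ jv ∈ JJ ℓ, ∀ k, lam k ∈ nabla (jv k)) :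
    ∀ ℓ, d * j0 ≤ ℓ →
      ((ℓ : ℝ) - d * j0 + d - 1) ^ (d - 1) * 2 ^ ℓ / (2 ^ d * ((d : ℝ) - 1) ^ (d - 1))
          ≤ ((Unabla ℓ).card : ℝ)
      ∧ ((Unabla ℓ).card : ℝ)
          ≤ (M / 2) ^ d * (Real.exp 1 / ((d : ℝ) - 1)) ^ (d - 1)
            * ((ℓ : ℝ) - d * j0 + d - 1) ^ (d - 1) * 2 ^ ℓ := by
  classical
  intro ℓ hℓ
  obtain ⟨n0, hn⟩ : ∃ n0, ℓ = n0 + d * j0 := ⟨ℓ - d * j0, by omega⟩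
  set kk := d - 1 with hkk
  have hd1 : 1 ≤ kk := by omega
  have hdk : d = kk + 1 := by omega
  set m := n0 + kk with hm
  -- cardinality of JJ ℓ
  have hJc : (JJ ℓ).card = m.choose kk := by
    rw [card_JJ_eq (JJ ℓ) (hJJ ℓ) hn]
    have h1 : d + n0 - 1 = m := by omega
    have h2 : m - kk = n0 := by omega
    rw [h1, ← Nat.choose_symm (Nat.le_add_left kk n0), h2]
  -- decomposition of Unabla ℓ
  have hUeq : Unabla ℓ = (JJ ℓ).biUnion (fun jv => Fintype.piFinset fun k => nabla (jv k)) := by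
    ext lam
    simp only [hUnabla, Finset.mem_biUnion, Fintype.mem_piFinset]
  have hpd : ∀ jv ∈ JJ ℓ, ∀ jv' ∈ JJ ℓ, jv ≠ jv' →
      Disjoint (Fintype.piFinset fun k => nabla (jv k))
        (Fintype.piFinset fun k => nabla (jv' k)) := by
    intro jv hjv jv' hjv' hne
    obtain ⟨h1, -⟩ := (hJJ ℓ jv).mp hjv
    obtain ⟨h1', -⟩ := (hJJ ℓ jv').mp hjv'
    obtain ⟨k, hk⟩ : ∃ k, jv k ≠ jv' k := by
      by_contra h; push_neg at h; exact hne (funext h)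
    rw [Finset.disjoint_left]
    intro lam h2 h3
    rw [Fintype.mem_piFinset] at h2 h3
    exact (Finset.disjoint_left.mp (hdisj _ _ (h1 k) (h1' k) hk)) (h2 k) (h3 k)
  have hUcard : (Unabla ℓ).card = ∑ jv ∈ JJ ℓ, ∏ k, (nabla (jv k)).card := by
    rw [hUeq, Finset.card_biUnion hpd]
    exact Finset.sum_congr rfl fun jv _ => Fintype.card_piFinset _
  have hUc : ((Unabla ℓ).card : ℝ) = ∑ jv ∈ JJ ℓ, ∏ k, ((nabla (jv k)).card : ℝ) := by
    rw [hUcard]; push_cast; rfl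
  -- pointwise bounds
  have h2j : ∀ j : ℕ, j0 ≤ j →
      (2 : ℝ) ^ j ≤ 2 * ((nabla j).card : ℝ) ∧ 2 * ((nabla j).card : ℝ) ≤ M * 2 ^ j := by
    intro j hj
    obtain ⟨hl, hu⟩ := hcard j hj
    have e1 : (2 : ℝ) * 2 ^ ((j : ℤ) - 1) = 2 ^ j := by
      rw [zpow_sub₀ (two_ne_zero), zpow_one, zpow_natCast]
      ring
    constructor
    · rw [← e1]; linarith
    · calc 2 * ((nabla j).card : ℝ) ≤ 2 * (M * 2 ^ ((j : ℤ) - 1)) := by linarith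
        _ = M * (2 * 2 ^ ((j : ℤ) - 1)) := by ring
        _ = M * 2 ^ j := by rw [e1]
  have hprod : ∀ jv ∈ JJ ℓ,
      (2 : ℝ) ^ ℓ / 2 ^ d ≤ ∏ k, ((nabla (jv k)).card : ℝ)
      ∧ ∏ k, ((nabla (jv k)).card : ℝ) ≤ M ^ d / 2 ^ d * 2 ^ ℓ := by
    intro jv hjv
    obtain ⟨h1, h2⟩ := (hJJ ℓ jv).mp hjv
    have hA : ∏ k, (2 : ℝ) ^ (jv k) ≤ ∏ k, (2 * ((nabla (jv k)).card : ℝ)) :=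
      Finset.prod_le_prod (fun k _ => by positivity) (fun k _ => (h2j (jv k) (h1 k)).1)
    have hB : ∏ k, (2 * ((nabla (jv k)).card : ℝ)) ≤ ∏ k, (M * (2 : ℝ) ^ (jv k)) :=
      Finset.prod_le_prod (fun k _ => mul_nonneg zero_le_two (Nat.cast_nonneg _)) (fun k _ => (h2j (jv k) (h1 k)).2)
    have hP2 : ∏ k, (2 : ℝ) ^ (jv k) = 2 ^ ℓ := by
      rw [Finset.prod_pow_eq_pow_sum, h2]
    have hPm : ∏ k, (2 * ((nabla (jv k)).card : ℝ))
        = 2 ^ d * ∏ k, ((nabla (jv k)).card : ℝ) := by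
      rw [Finset.prod_mul_distrib, Finset.prod_const, Finset.card_univ, Fintype.card_fin]
    have hPM : ∏ k, (M * (2 : ℝ) ^ (jv k)) = M ^ d * 2 ^ ℓ := by
      rw [Finset.prod_mul_distrib, Finset.prod_const, Finset.card_univ, Fintype.card_fin, hP2]
    have hA' : (2 : ℝ) ^ ℓ ≤ 2 ^ d * ∏ k, ((nabla (jv k)).card : ℝ) := by
      rw [← hP2, ← hPm]; exact hA
    have hB' : 2 ^ d * ∏ k, ((nabla (jv k)).card : ℝ) ≤ M ^ d * 2 ^ ℓ := by
      rw [← hPm, ← hPM]; exact hB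
    have hpos : (0 : ℝ) < 2 ^ d := by positivity
    constructor
    · rw [div_le_iff₀ hpos]; linarith
    · rw [div_mul_eq_mul_div, le_div_iff₀ hpos]; linarith
  -- sum bounds
  have hsl : ((JJ ℓ).card : ℝ) * ((2 : ℝ) ^ ℓ / 2 ^ d)
      ≤ ∑ jv ∈ JJ ℓ, ∏ k, ((nabla (jv k)).card : ℝ) := by
    simpa [nsmul_eq_mul] using
      Finset.card_nsmul_le_sum (JJ ℓ) (fun jv => ∏ k, ((nabla (jv k)).card : ℝ))
        ((2 : ℝ) ^ ℓ / 2 ^ d) (fun jv h => (hprod jv h).1)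
  have hsu : ∑ jv ∈ JJ ℓ, ∏ k, ((nabla (jv k)).card : ℝ)
      ≤ ((JJ ℓ).card : ℝ) * (M ^ d / 2 ^ d * 2 ^ ℓ) := by
    simpa [nsmul_eq_mul] using
      Finset.sum_le_card_nsmul (JJ ℓ) (fun jv => ∏ k, ((nabla (jv k)).card : ℝ))
        (M ^ d / 2 ^ d * 2 ^ ℓ) (fun jv h => (hprod jv h).2)
  -- binomial bounds, real versions
  have hkpos : (0 : ℝ) < (kk : ℝ) := by exact_mod_cast hd1
  have hCl : ((m : ℝ)) ^ kk ≤ (kk : ℝ) ^ kk * (m.choose kk : ℝ) := by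
    exact_mod_cast pow_le_pow_mul_choose (Nat.le_add_left kk n0)
  have hCu : ((m.choose kk : ℕ) : ℝ) ≤ (Real.exp 1 / kk) ^ kk * (m : ℝ) ^ kk := by
    have h1 : ((m.choose kk : ℕ) : ℝ) ≤ (m : ℝ) ^ kk / kk ! := by
      have := Nat.choose_le_pow_div (α := ℝ) kk m
      push_cast at this ⊢
      exact this
    have h2 := pow_le_exp_mul_factorial kk
    have h3 : (m : ℝ) ^ kk / kk ! ≤ Real.exp 1 ^ kk * (m : ℝ) ^ kk / (kk : ℝ) ^ kk := by
      rw [div_le_div_iff₀ (by positivity) (by positivity)]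
      calc (m : ℝ) ^ kk * (kk : ℝ) ^ kk = (kk : ℝ) ^ kk * (m : ℝ) ^ kk := by ring
      _ ≤ (Real.exp 1 ^ kk * kk !) * (m : ℝ) ^ kk :=
        mul_le_mul_of_nonneg_right h2 (by positivity)
      _ = Real.exp 1 ^ kk * (m : ℝ) ^ kk * (kk !) := by ring
    calc ((m.choose kk : ℕ) : ℝ) ≤ (m : ℝ) ^ kk / kk ! := h1
    _ ≤ Real.exp 1 ^ kk * (m : ℝ) ^ kk / (kk : ℝ) ^ kk := h3
    _ = (Real.exp 1 / kk) ^ kk * (m : ℝ) ^ kk := by rw [div_pow]; ring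
  -- casts
  have hℓR : (ℓ : ℝ) = (n0 : ℝ) + d * j0 := by exact_mod_cast (congrArg (Nat.cast (R := ℝ)) hn)
  have hdR : (d : ℝ) = (kk : ℝ) + 1 := by exact_mod_cast (congrArg (Nat.cast (R := ℝ)) hdk)
  have hmR : ((m : ℕ) : ℝ) = (n0 : ℝ) + kk := by exact_mod_cast (congrArg (Nat.cast (R := ℝ)) hm)
  have hcast1 : ((ℓ : ℝ) - d * j0 + d - 1) = (m : ℝ) := by rw [hℓR, hmR, hdR]; ring
  have hcast2 : ((d : ℝ) - 1) = (kk : ℝ) := by rw [hdR]; ring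
  have hJcR : ((JJ ℓ).card : ℝ) = (m.choose kk : ℝ) := by exact_mod_cast hJc
  rw [hcast1, hcast2, hUc]
  constructor
  · calc (m : ℝ) ^ kk * 2 ^ ℓ / (2 ^ d * (kk : ℝ) ^ kk)
        = ((m : ℝ) ^ kk / (kk : ℝ) ^ kk) * ((2 : ℝ) ^ ℓ / 2 ^ d) := by
          field_simp
    _ ≤ (m.choose kk : ℝ) * ((2 : ℝ) ^ ℓ / 2 ^ d) := by
        apply mul_le_mul_of_nonneg_right _ (by positivity)
        rw [div_le_iff₀ (by positivity)]
        linarith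
    _ = ((JJ ℓ).card : ℝ) * ((2 : ℝ) ^ ℓ / 2 ^ d) := by rw [hJcR]
    _ ≤ _ := hsl
  · calc ∑ jv ∈ JJ ℓ, ∏ k, ((nabla (jv k)).card : ℝ)
        ≤ ((JJ ℓ).card : ℝ) * (M ^ d / 2 ^ d * 2 ^ ℓ) := hsu
    _ = (m.choose kk : ℝ) * (M ^ d / 2 ^ d * 2 ^ ℓ) := by rw [hJcR]
    _ ≤ ((Real.exp 1 / kk) ^ kk * (m : ℝ) ^ kk) * (M ^ d / 2 ^ d * 2 ^ ℓ) := by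
        apply mul_le_mul_of_nonneg_right hCu
        positivity
    _ = (M / 2) ^ d * (Real.exp 1 / (kk : ℝ)) ^ kk * (m : ℝ) ^ kk * 2 ^ ℓ := by
        rw [div_pow M 2 d]
        ring
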